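/- For each k ∈ ℤ, the statistic exc_k, counting the entries x = τ(j) of a permutation τ with excess x − j = k, satisfies exc_k(τ) = ∑_π (-1)^{|π|-k-1} (∑_{x ∈ SSF(π)} C(|π|-1, x-k-1)) · occ(π, τ), where SSF(π) is the set of skew strong fixed point values of π. -/

import Mathlib

open Finset

/-- Number of occurrences of the classical pattern `σ` in `τ`. -/
def occ {k n : ℕ} (σ : Equiv.Perm (Fin k)) (τ : Equiv.Perm (Fin n)) : ℕ :=
  (univ.filter fun f : Fin k → Fin n =>
    (∀ i j : Fin k, i < j → f i < f j) ∧
    (∀ i j : Fin k, σ i < σ j ↔ τ (f i) < τ (f j))).card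

/-- Binomial coefficient `C(a, b)` with an integer lower index, `0` when `b < 0`. -/
def ichoose (a : ℕ) (b : ℤ) : ℕ :=
  if 0 ≤ b then a.choose b.toNat else 0

/-- The set of positions of skew strong fixed points of `π`: positions `j` such that
no `i < j` has `π(i) < π(j)` and no `i > j` has `π(i) > π(j)`.  (Summing over these
positions is the same as summing over the skew strong fixed point values `x = π(j)`.) -/
def ssfPos {n : ℕ} (π : Equiv.Perm (Fin n)) : Finset (Fin n) :=
  univ.filter fun j : Fin n =>
    (∀ i : Fin n, i < j → π j < π i) ∧ (∀ i : Fin n, j < i → π i < π j)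

lemma ichoose_succ (s : ℕ) (c : ℤ) :
    ichoose (s + 1) c = ichoose s c + ichoose s (c - 1) := by
  unfold ichoose
  rcases lt_trichotomy c 0 with h | h | h
  · rw [if_neg (by omega), if_neg (by omega), if_neg (by omega)]
  · subst h; simp
  · rw [if_pos (by omega), if_pos (by omega), if_pos (by omega)]
    have h1 : c.toNat = (c - 1).toNat + 1 := by omega
    rw [h1, Nat.choose_succ_succ']
    exact Nat.add_comm _ _

lemma ichoose_zero (c : ℤ) : ichoose 0 c = if c = 0 then 1 else 0 := by
  unfold ichoose
  rcases lt_trichotomy c 0 with h | h | h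
  · rw [if_neg (by omega), if_neg (by omega)]
  · subst h; simp
  · rw [if_pos (by omega), if_neg (by omega), Nat.choose_eq_zero_iff.2 (by omega)]

def FF (A B : ℕ) (k : ℤ) : ℚ :=
  ∑ a ∈ range (A + 1), (A.choose a : ℚ) *
    ∑ b ∈ range (B + 1), (B.choose b : ℚ) *
      ((-1 : ℚ) ^ (a + b) * ichoose (a + b) ((b : ℤ) - k))

lemma choose_split (g : ℕ → ℚ) (A : ℕ) :
    ∑ a ∈ range (A + 2), ((A + 1).choose a : ℚ) * g a =
      (∑ a ∈ range (A + 1), (A.choose a : ℚ) * g a) +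
        ∑ a ∈ range (A + 1), (A.choose a : ℚ) * g (a + 1) :=
  Finset.sum_choose_succ_mul (fun i _ => g i) A

lemma FF_zero_zero (k : ℤ) : FF 0 0 k = if k = 0 then 1 else 0 := by
  have : FF 0 0 k = (ichoose 0 ((0:ℤ) - k) : ℚ) := by
    simp [FF]
  rw [this, ichoose_zero]
  split_ifs with h h' h' <;> first | rfl | omega

lemma term_step (m : ℕ) (c : ℤ) :
    (-1 : ℚ) ^ (m + 1) * ichoose (m + 1) c =
      -((-1 : ℚ) ^ m * ichoose m c + (-1 : ℚ) ^ m * ichoose m (c - 1)) := by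
  rw [ichoose_succ, pow_succ]
  push_cast
  ring

lemma FF_succ_left (A B : ℕ) (k : ℤ) : FF (A + 1) B k = -FF A B (k + 1) := by
  have e2 : FF (A + 1) B k = FF A B k +
      ∑ a ∈ range (A + 1), (A.choose a : ℚ) *
        ∑ b ∈ range (B + 1), (B.choose b : ℚ) *
          ((-1 : ℚ) ^ (a + 1 + b) * ichoose (a + 1 + b) ((b : ℤ) - k)) :=
    choose_split (fun a => ∑ b ∈ range (B + 1), (B.choose b : ℚ) *
      ((-1 : ℚ) ^ (a + b) * ichoose (a + b) ((b : ℤ) - k))) A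
  have e3 : ∑ a ∈ range (A + 1), (A.choose a : ℚ) *
      ∑ b ∈ range (B + 1), (B.choose b : ℚ) *
        ((-1 : ℚ) ^ (a + 1 + b) * ichoose (a + 1 + b) ((b : ℤ) - k)) =
      -(FF A B k + FF A B (k + 1)) := by
    unfold FF
    rw [neg_add, ← Finset.sum_neg_distrib, ← Finset.sum_neg_distrib, ← Finset.sum_add_distrib]
    refine Finset.sum_congr rfl fun a _ => ?_
    rw [show ∀ x y : ℚ, -((A.choose a : ℚ) * x) + -((A.choose a : ℚ) * y)
        = (A.choose a : ℚ) * (-(x + y)) from fun x y => by ring]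
    congr 1
    rw [neg_add, ← Finset.sum_neg_distrib, ← Finset.sum_neg_distrib, ← Finset.sum_add_distrib]
    refine Finset.sum_congr rfl fun b _ => ?_
    have e1 : a + 1 + b = (a + b) + 1 := by omega
    have e4 : (b : ℤ) - k - 1 = (b : ℤ) - (k + 1) := by ring
    rw [e1, term_step, e4]
    ring
  rw [e2, e3]
  ring

lemma FF_succ_right (A B : ℕ) (k : ℤ) : FF A (B + 1) k = -FF A B (k - 1) := by
  have e0 : -FF A B (k - 1) = ∑ a ∈ range (A + 1), (A.choose a : ℚ) *
      -(∑ b ∈ range (B + 1), (B.choose b : ℚ) *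
        ((-1 : ℚ) ^ (a + b) * ichoose (a + b) ((b : ℤ) - (k - 1)))) := by
    unfold FF
    rw [← Finset.sum_neg_distrib]
    exact Finset.sum_congr rfl fun a _ => by ring
  rw [e0]
  show ∑ a ∈ range (A + 1), (A.choose a : ℚ) *
      ∑ b ∈ range (B + 1 + 1), ((B + 1).choose b : ℚ) *
        ((-1 : ℚ) ^ (a + b) * ichoose (a + b) ((b : ℤ) - k)) = _
  refine Finset.sum_congr rfl fun a _ => ?_
  congr 1
  rw [choose_split (fun b => (-1 : ℚ) ^ (a + b) * ichoose (a + b) ((b : ℤ) - k)) B]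
  have e5 : ∑ b ∈ range (B + 1), (B.choose b : ℚ) *
      ((-1 : ℚ) ^ (a + (b + 1)) * ichoose (a + (b + 1)) (((b : ℕ) + 1 : ℕ) - k)) =
      -((∑ b ∈ range (B + 1), (B.choose b : ℚ) *
          ((-1 : ℚ) ^ (a + b) * ichoose (a + b) ((b : ℤ) - k))) +
        ∑ b ∈ range (B + 1), (B.choose b : ℚ) *
          ((-1 : ℚ) ^ (a + b) * ichoose (a + b) ((b : ℤ) - (k - 1)))) := by
    rw [neg_add, ← Finset.sum_neg_distrib, ← Finset.sum_neg_distrib, ← Finset.sum_add_distrib]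
    refine Finset.sum_congr rfl fun b _ => ?_
    have e1 : a + (b + 1) = (a + b) + 1 := by omega
    have e4 : (((b : ℕ) + 1 : ℕ) : ℤ) - k = (b : ℤ) - (k - 1) := by push_cast; ring
    have e6 : (b : ℤ) - (k - 1) - 1 = (b : ℤ) - k := by ring
    rw [e1, e4, term_step, e6]
    ring
  rw [e5]
  ring

lemma FF_eq (A B : ℕ) (k : ℤ) :
    FF A B k = (-1 : ℚ) ^ (A + B) * (if (B : ℤ) - A = k then 1 else 0) := by
  induction A generalizing B k with
  | zero =>
    induction B generalizing k with
    | zero =>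
      rw [FF_zero_zero]
      by_cases h : k = 0
      · rw [if_pos h, if_pos (by omega)]; norm_num
      · rw [if_neg h, if_neg (by omega)]; norm_num
    | succ B ih =>
      rw [FF_succ_right, ih (k - 1)]
      by_cases h : ((B : ℤ) + 1) - 0 = k
      · rw [if_pos (by omega), if_pos (by push_cast; omega)]
        rw [show 0 + (B + 1) = (0 + B) + 1 by omega, pow_succ]; ring
      · rw [if_neg (by omega), if_neg (by push_cast; omega)]
        ring
  | succ A ih =>
    rw [FF_succ_left, ih B (k + 1)]
    by_cases h : (B : ℤ) - ((A : ℤ) + 1) = k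
    · rw [if_pos (by omega), if_pos (by push_cast; omega)]
      rw [show A + 1 + B = (A + B) + 1 by omega, pow_succ]; ring
    · rw [if_neg (by omega), if_neg (by push_cast; omega)]
      ring

variable {n : ℕ}


def Dset (τ : Equiv.Perm (Fin n)) (t : Fin n) : Finset (Fin n) :=
  univ.filter fun s => (s < t ∧ τ t < τ s) ∨ (t < s ∧ τ s < τ t)

lemma card_filter_lt_fin {N : ℕ} (r : Fin N) :
    (univ.filter fun s : Fin N => s < r).card = (r : ℕ) := by
  rw [show univ.filter (fun s : Fin N => s < r) = Finset.Iio r from by ext; simp, Fin.card_Iio]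

lemma orderIso_rank {α : Type*} [LinearOrder α] {s : Finset α} {N : ℕ}
    (e : Fin N ≃o {x // x ∈ s}) (i : Fin N) :
    (s.filter fun v => v < (e i : α)).card = (i : ℕ) := by
  have himg : s.filter (fun v => v < (e i : α)) =
      (univ.filter fun j : Fin N => j < i).image (fun j => (e j : α)) := by
    ext v
    simp only [mem_filter, mem_image, mem_univ, true_and]
    constructor
    · rintro ⟨hv, hlt⟩
      refine ⟨e.symm ⟨v, hv⟩, ?_, by simp⟩
      have : e (e.symm ⟨v, hv⟩) < e i := by
        rw [e.apply_symm_apply]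
        exact Subtype.coe_lt_coe.mp (by simpa using hlt)
      exact e.lt_iff_lt.mp this
    · rintro ⟨j, hj, rfl⟩
      exact ⟨(e j).2, Subtype.coe_lt_coe.mpr (e.lt_iff_lt.mpr hj)⟩
  rw [himg, Finset.card_image_of_injective _
    (show Function.Injective (fun j : Fin N => (e j : α)) from
      fun a b hab => e.injective (Subtype.val_injective hab)), card_filter_lt_fin]

noncomputable def patt (m : ℕ) (τ : Equiv.Perm (Fin n)) (T : Finset (Fin n)) :
    Equiv.Perm (Fin (m + 1)) := by
  classical
  exact if h : T.card = m + 1 then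
    Equiv.ofBijective
      (fun i => ((T.image τ).orderIsoOfFin
          (by rw [Finset.card_image_of_injective _ τ.injective, h])).symm
        ⟨τ (T.orderEmbOfFin h i), Finset.mem_image_of_mem τ (Finset.orderEmbOfFin_mem T h i)⟩)
      (Finite.injective_iff_bijective.mp (fun i j hij => by
        exact (T.orderEmbOfFin h).injective (τ.injective (Subtype.mk_eq_mk.mp
          ((((T.image τ).orderIsoOfFin
            (by rw [Finset.card_image_of_injective _ τ.injective, h])).symm).injective hij)))))
  else 1

lemma patt_lt_iff (m : ℕ) (τ : Equiv.Perm (Fin n)) (T : Finset (Fin n)) (h : T.card = m + 1)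
    (i j : Fin (m + 1)) :
    patt m τ T i < patt m τ T j ↔ τ (T.orderEmbOfFin h i) < τ (T.orderEmbOfFin h j) := by
  unfold patt
  rw [dif_pos h]
  rw [Equiv.ofBijective_apply, Equiv.ofBijective_apply, OrderIso.lt_iff_lt]
  exact Subtype.mk_lt_mk

lemma patt_val (m : ℕ) (τ : Equiv.Perm (Fin n)) (T : Finset (Fin n)) (h : T.card = m + 1)
    (i : Fin (m + 1)) :
    ((patt m τ T i : ℕ)) = (T.filter fun s => τ s < τ (T.orderEmbOfFin h i)).card := by
  classical
  have h' : (T.image τ).card = m + 1 := by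
    rw [Finset.card_image_of_injective _ τ.injective, h]
  have e1 : ((T.image τ).orderIsoOfFin h') (patt m τ T i) =
      ⟨τ (T.orderEmbOfFin h i), Finset.mem_image_of_mem τ (Finset.orderEmbOfFin_mem T h i)⟩ := by
    unfold patt
    rw [dif_pos h, Equiv.ofBijective_apply, OrderIso.apply_symm_apply]
  have := orderIso_rank ((T.image τ).orderIsoOfFin h') (patt m τ T i)
  rw [e1] at this
  rw [← this]
  have himg : (T.image τ).filter (fun v => v < τ (T.orderEmbOfFin h i)) =
      (T.filter fun s => τ s < τ (T.orderEmbOfFin h i)).image τ := by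
    rw [Finset.filter_image]
  rw [himg, Finset.card_image_of_injective _ τ.injective]

lemma perm_eq_of_lt_iff {N : ℕ} (π π' : Equiv.Perm (Fin N))
    (h : ∀ i j, π i < π j ↔ π' i < π' j) : π = π' := by
  have hmono : ∀ a b : Fin N, (π.symm.trans π') a < (π.symm.trans π') b ↔ a < b := by
    intro a b
    rw [Equiv.trans_apply, Equiv.trans_apply, ← h, Equiv.apply_symm_apply,
      Equiv.apply_symm_apply]
  let oi : Fin N ≃o Fin N :=
    { toEquiv := π.symm.trans π'
      map_rel_iff' := by
        intro a b
        show (π.symm.trans π') a ≤ (π.symm.trans π') b ↔ a ≤ b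
        rw [← not_lt, ← not_lt, hmono] }
  have hoi : oi = OrderIso.refl (Fin N) := Subsingleton.elim _ _
  ext i
  have h3 : oi (π i) = π i := by rw [hoi]; rfl
  have h4 : oi (π i) = π' i := by
    show π' (π.symm (π i)) = π' i
    rw [Equiv.symm_apply_apply]
  exact congrArg Fin.val (h3.symm.trans h4)

lemma occ_eq_card (m : ℕ) (π : Equiv.Perm (Fin (m + 1))) (τ : Equiv.Perm (Fin n)) :
    occ π τ =
      ((powersetCard (m + 1) (univ : Finset (Fin n))).filter fun T => patt m τ T = π).card := by
  classical
  refine Finset.card_bij (fun f _ => Finset.image f univ) ?_ ?_ ?_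
  · rintro f hf
    rw [mem_filter] at hf
    obtain ⟨-, hmono, hpat⟩ := hf
    have hsm : StrictMono f := fun a b hab => hmono a b hab
    have hcard : (Finset.image f univ).card = m + 1 := by
      rw [Finset.card_image_of_injective _ hsm.injective, card_univ, Fintype.card_fin]
    rw [mem_filter, mem_powersetCard]
    refine ⟨⟨subset_univ _, hcard⟩, ?_⟩
    have hf_emb : f = (Finset.image f univ).orderEmbOfFin hcard :=
      Finset.orderEmbOfFin_unique hcard (fun x => mem_image_of_mem f (mem_univ x)) hsm
    refine (perm_eq_of_lt_iff _ _ fun i j => ?_)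
    rw [patt_lt_iff m τ _ hcard, ← hf_emb, ← hpat]
  · rintro f hf g hg hfg
    rw [mem_filter] at hf hg
    have hsf : StrictMono f := fun a b hab => hf.2.1 a b hab
    have hsg : StrictMono g := fun a b hab => hg.2.1 a b hab
    have hcard : (Finset.image f univ).card = m + 1 := by
      rw [Finset.card_image_of_injective _ hsf.injective, card_univ, Fintype.card_fin]
    have h1 : f = (Finset.image f univ).orderEmbOfFin hcard :=
      Finset.orderEmbOfFin_unique hcard (fun x => mem_image_of_mem f (mem_univ x)) hsf
    have hfg' : Finset.image f univ = Finset.image g univ := hfg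
    have h2 : g = (Finset.image f univ).orderEmbOfFin hcard := by
      refine Finset.orderEmbOfFin_unique hcard (fun x => ?_) hsg
      rw [hfg']; exact mem_image_of_mem g (mem_univ x)
    rw [h1, h2]
  · rintro T hT
    rw [mem_filter, mem_powersetCard] at hT
    obtain ⟨⟨-, hcard⟩, hpatt⟩ := hT
    refine ⟨(T.orderEmbOfFin hcard : Fin (m + 1) → Fin n), ?_, ?_⟩
    · rw [mem_filter]
      refine ⟨mem_univ _, fun i j hij => (T.orderEmbOfFin hcard).strictMono hij, fun i j => ?_⟩
      rw [← hpatt, patt_lt_iff m τ T hcard]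
    · ext x
      simp only [Finset.mem_image, mem_univ, true_and]
      constructor
      · rintro ⟨i, rfl⟩; exact Finset.orderEmbOfFin_mem T hcard i
      · intro hx
        have : x ∈ Set.range (T.orderEmbOfFin hcard) := by
          rw [Finset.range_orderEmbOfFin]; exact hx
        obtain ⟨i, hi⟩ := this
        exact ⟨i, hi⟩

lemma sum_occ (m : ℕ) (τ : Equiv.Perm (Fin n)) (F : Equiv.Perm (Fin (m + 1)) → ℚ) :
    ∑ π : Equiv.Perm (Fin (m + 1)), F π * (occ π τ : ℚ) =
      ∑ T ∈ powersetCard (m + 1) (univ : Finset (Fin n)), F (patt m τ T) := by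
  classical
  rw [← Finset.sum_fiberwise_of_maps_to (fun T _ => mem_univ (patt m τ T))
    (fun T => F (patt m τ T))]
  refine Finset.sum_congr rfl fun π _ => ?_
  have hc : ∑ T ∈ (powersetCard (m + 1) (univ : Finset (Fin n))).filter
      (fun T => patt m τ T = π), F (patt m τ T) =
      ∑ _T ∈ (powersetCard (m + 1) (univ : Finset (Fin n))).filter
      (fun T => patt m τ T = π), F π :=
    Finset.sum_congr rfl (fun T hT => by rw [(mem_filter.mp hT).2])
  rw [hc, Finset.sum_const, occ_eq_card m π τ, nsmul_eq_mul, mul_comm]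

lemma mem_Dset (τ : Equiv.Perm (Fin n)) (t s : Fin n) :
    s ∈ Dset τ t ↔ (s < t ∧ τ t < τ s) ∨ (t < s ∧ τ s < τ t) := by
  simp [Dset]

lemma not_mem_Dset_self (τ : Equiv.Perm (Fin n)) (t : Fin n) : t ∉ Dset τ t := by
  rw [mem_Dset]
  rintro (⟨h, -⟩ | ⟨h, -⟩) <;> exact lt_irrefl _ h

lemma mem_T_exists (T : Finset (Fin n)) {m : ℕ} (h : T.card = m + 1) {s : Fin n} (hs : s ∈ T) :
    ∃ i, T.orderEmbOfFin h i = s := by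
  have : s ∈ Set.range (T.orderEmbOfFin h) := by rw [Finset.range_orderEmbOfFin]; exact hs
  exact this

lemma ssfPos_iff (m : ℕ) (τ : Equiv.Perm (Fin n)) (T : Finset (Fin n)) (h : T.card = m + 1)
    (j : Fin (m + 1)) :
    j ∈ ssfPos (patt m τ T) ↔
      ∀ s ∈ T, s ≠ T.orderEmbOfFin h j → s ∈ Dset τ (T.orderEmbOfFin h j) := by
  set f := T.orderEmbOfFin h with hf
  rw [ssfPos, mem_filter]
  simp only [mem_univ, true_and]
  constructor
  · rintro ⟨H1, H2⟩ s hs hne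
    obtain ⟨i, rfl⟩ := mem_T_exists T h hs
    have hij : i ≠ j := fun hh => hne (by rw [hh])
    rw [mem_Dset]
    rcases lt_or_gt_of_ne hij with hlt | hgt
    · exact Or.inl ⟨f.strictMono hlt, (patt_lt_iff m τ T h j i).mp (H1 i hlt)⟩
    · exact Or.inr ⟨f.strictMono hgt, (patt_lt_iff m τ T h i j).mp (H2 i hgt)⟩
  · intro H
    constructor
    · intro i hlt
      have hD := H (f i) (Finset.orderEmbOfFin_mem T h i)
        (fun hh => absurd (f.injective hh) (by omega))
      rw [mem_Dset] at hD
      rcases hD with ⟨-, hv⟩ | ⟨hp, -⟩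
      · exact (patt_lt_iff m τ T h j i).mpr hv
      · exact absurd (f.strictMono hlt) (by omega)
    · intro i hgt
      have hD := H (f i) (Finset.orderEmbOfFin_mem T h i)
        (fun hh => absurd (f.injective hh) (by omega))
      rw [mem_Dset] at hD
      rcases hD with ⟨hp, -⟩ | ⟨-, hv⟩
      · exact absurd (f.strictMono hgt) (by omega)
      · exact (patt_lt_iff m τ T h i j).mpr hv

lemma sum_ssf (m : ℕ) (τ : Equiv.Perm (Fin n)) (T : Finset (Fin n)) (h : T.card = m + 1)
    (c : ℕ → ℚ) :
    ∑ j ∈ ssfPos (patt m τ T), c ((patt m τ T j : ℕ)) =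
      ∑ t ∈ T.filter (fun t => ∀ s ∈ T, s ≠ t → s ∈ Dset τ t),
        c ((T.filter fun s => τ s < τ t).card) := by
  classical
  refine Finset.sum_bij (fun j _ => T.orderEmbOfFin h j) ?_ ?_ ?_ ?_
  · intro j hj
    rw [mem_filter]
    exact ⟨Finset.orderEmbOfFin_mem T h j, (ssfPos_iff m τ T h j).mp hj⟩
  · intro a ha b hb hab
    exact (T.orderEmbOfFin h).injective hab
  · intro t ht
    rw [mem_filter] at ht
    obtain ⟨j, rfl⟩ := mem_T_exists T h ht.1
    exact ⟨j, (ssfPos_iff m τ T h j).mpr ht.2, rfl⟩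
  · intro j hj
    rw [patt_val m τ T h j]

lemma swap_sum (m : ℕ) (τ : Equiv.Perm (Fin n)) (q : Fin n → Finset (Fin n) → ℚ) :
    ∑ T ∈ powersetCard (m + 1) (univ : Finset (Fin n)),
      ∑ t ∈ T.filter (fun t => ∀ s ∈ T, s ≠ t → s ∈ Dset τ t), q t T =
    ∑ t : Fin n, ∑ T ∈ (powersetCard (m + 1) (univ : Finset (Fin n))).filter
        (fun T => t ∈ T ∧ ∀ s ∈ T, s ≠ t → s ∈ Dset τ t), q t T := by
  classical
  have h1 : ∀ T : Finset (Fin n), T.filter (fun t => ∀ s ∈ T, s ≠ t → s ∈ Dset τ t) =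
      univ.filter (fun t => t ∈ T ∧ ∀ s ∈ T, s ≠ t → s ∈ Dset τ t) := by
    intro T; ext t; simp [mem_filter]
  calc ∑ T ∈ powersetCard (m + 1) (univ : Finset (Fin n)),
      ∑ t ∈ T.filter (fun t => ∀ s ∈ T, s ≠ t → s ∈ Dset τ t), q t T
      = ∑ T ∈ powersetCard (m + 1) (univ : Finset (Fin n)), ∑ t : Fin n,
          if t ∈ T ∧ ∀ s ∈ T, s ≠ t → s ∈ Dset τ t then q t T else 0 := by
        refine Finset.sum_congr rfl fun T _ => ?_
        rw [h1 T, Finset.sum_filter]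
    _ = ∑ t : Fin n, ∑ T ∈ powersetCard (m + 1) (univ : Finset (Fin n)),
          if t ∈ T ∧ ∀ s ∈ T, s ≠ t → s ∈ Dset τ t then q t T else 0 := Finset.sum_comm
    _ = _ := by
        refine Finset.sum_congr rfl fun t _ => ?_
        rw [Finset.sum_filter]

lemma sum_T_erase (m : ℕ) (τ : Equiv.Perm (Fin n)) (t : Fin n) (c : ℕ → ℚ) :
    ∑ T ∈ (powersetCard (m + 1) (univ : Finset (Fin n))).filter
        (fun T => t ∈ T ∧ ∀ s ∈ T, s ≠ t → s ∈ Dset τ t),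
      c ((T.filter fun s => τ s < τ t).card) =
    ∑ S ∈ powersetCard m (Dset τ t), c ((S.filter fun s => τ s < τ t).card) := by
  classical
  refine Finset.sum_bij' (fun T _ => T.erase t) (fun S _ => insert t S) ?_ ?_ ?_ ?_ ?_
  · intro T hT
    rw [mem_filter, mem_powersetCard] at hT
    obtain ⟨⟨-, hcard⟩, htT, hD⟩ := hT
    rw [mem_powersetCard]
    refine ⟨fun s hs => ?_, ?_⟩
    · rw [mem_erase] at hs
      exact hD s hs.2 hs.1
    · rw [Finset.card_erase_of_mem htT, hcard]
      omega
  · intro S hS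
    rw [mem_powersetCard] at hS
    obtain ⟨hsub, hcard⟩ := hS
    have htS : t ∉ S := fun hh => not_mem_Dset_self τ t (hsub hh)
    rw [mem_filter, mem_powersetCard]
    refine ⟨⟨subset_univ _, by rw [Finset.card_insert_of_notMem htS, hcard]⟩,
      mem_insert_self t S, fun s hs hne => hsub ?_⟩
    rcases mem_insert.mp hs with rfl | h
    · exact absurd rfl hne
    · exact h
  · intro T hT
    rw [mem_filter] at hT
    exact Finset.insert_erase hT.2.1
  · intro S hS
    rw [mem_powersetCard] at hS
    exact Finset.erase_insert (fun hh => not_mem_Dset_self τ t (hS.1 hh))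
  · intro T hT
    congr 1
    have : T.filter (fun s => τ s < τ t) = (T.erase t).filter (fun s => τ s < τ t) := by
      ext s
      simp only [mem_filter, mem_erase]
      constructor
      · rintro ⟨hsT, hlt⟩
        exact ⟨⟨fun hh => absurd (hh ▸ hlt) (lt_irrefl _), hsT⟩, hlt⟩
      · rintro ⟨⟨-, hsT⟩, hlt⟩
        exact ⟨hsT, hlt⟩
    rw [this]

def Lset (τ : Equiv.Perm (Fin n)) (t : Fin n) : Finset (Fin n) :=
  univ.filter fun s => s < t ∧ τ t < τ s

def Rset (τ : Equiv.Perm (Fin n)) (t : Fin n) : Finset (Fin n) :=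
  univ.filter fun s => t < s ∧ τ s < τ t

lemma Dset_eq_union (τ : Equiv.Perm (Fin n)) (t : Fin n) :
    Dset τ t = Lset τ t ∪ Rset τ t := by
  ext s; simp [Dset, Lset, Rset]

lemma disjoint_LR (τ : Equiv.Perm (Fin n)) (t : Fin n) : Disjoint (Lset τ t) (Rset τ t) := by
  rw [Finset.disjoint_left]
  intro s hs hs'
  simp only [Lset, Rset, mem_filter, mem_univ, true_and] at hs hs'
  exact absurd (hs.1.trans hs'.1) (lt_irrefl s)

lemma count_LR (τ : Equiv.Perm (Fin n)) (t : Fin n) :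
    ((Rset τ t).card : ℤ) - ((Lset τ t).card : ℤ) = (τ t : ℤ) - (t : ℤ) := by
  classical
  set X := (univ.filter fun s : Fin n => s < t ∧ τ s < τ t).card with hX
  have h1 : (Lset τ t).card + X = (t : ℕ) := by
    have hsplit := Finset.card_filter_add_card_filter_not
      (s := univ.filter fun s : Fin n => s < t) (p := fun s => τ t < τ s)
    rw [card_filter_lt_fin t] at hsplit
    have e1 : (univ.filter fun s : Fin n => s < t).filter (fun s => τ t < τ s) = Lset τ t := by
      ext s; simp only [Lset, mem_filter, mem_univ, true_and, and_assoc]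
    have e2 : (univ.filter fun s : Fin n => s < t).filter (fun s => ¬ τ t < τ s) =
        univ.filter fun s : Fin n => s < t ∧ τ s < τ t := by
      ext s
      simp only [mem_filter, mem_univ, true_and, not_lt]
      constructor
      · rintro ⟨hlt, hle⟩
        refine ⟨hlt, lt_of_le_of_ne hle fun hh => ?_⟩
        exact absurd (τ.injective hh) (by intro h'; subst h'; exact absurd hlt (lt_irrefl _))
      · rintro ⟨hlt, h2⟩
        exact ⟨hlt, le_of_lt h2⟩
    rw [e1, e2] at hsplit
    exact hsplit
  have h2 : (Rset τ t).card + X = ((τ t : ℕ)) := by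
    have hcard : (univ.filter fun s : Fin n => τ s < τ t).card = ((τ t : ℕ)) := by
      rw [← card_filter_lt_fin (τ t)]
      refine Finset.card_bij (fun s _ => τ s) ?_ ?_ ?_
      · intro s hs; simp only [mem_filter, mem_univ, true_and] at hs ⊢; exact hs
      · intro a _ b _ hab; exact τ.injective hab
      · intro v hv
        simp only [mem_filter, mem_univ, true_and] at hv
        exact ⟨τ.symm v, by simp [mem_filter, hv], by simp⟩
    have hsplit := Finset.card_filter_add_card_filter_not
      (s := univ.filter fun s : Fin n => τ s < τ t) (p := fun s => t < s)
    rw [hcard] at hsplit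
    have e1 : (univ.filter fun s : Fin n => τ s < τ t).filter (fun s => t < s) = Rset τ t := by
      ext s; simp only [Rset, mem_filter, mem_univ, true_and, and_assoc]
      tauto
    have e2 : (univ.filter fun s : Fin n => τ s < τ t).filter (fun s => ¬ t < s) =
        univ.filter fun s : Fin n => s < t ∧ τ s < τ t := by
      ext s
      simp only [mem_filter, mem_univ, true_and, not_lt]
      constructor
      · rintro ⟨hlt, hle⟩
        refine ⟨lt_of_le_of_ne hle fun hh => ?_, hlt⟩
        subst hh; exact absurd hlt (lt_irrefl _)
      · rintro ⟨h2, hlt⟩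
        exact ⟨hlt, le_of_lt h2⟩
    rw [e1, e2] at hsplit
    exact hsplit
  omega

lemma sum_powerset_union {α : Type*} [DecidableEq α] {L R : Finset α} (h : Disjoint L R)
    (f : Finset α → ℚ) :
    ∑ S ∈ (L ∪ R).powerset, f S = ∑ P ∈ L.powerset, ∑ Q ∈ R.powerset, f (P ∪ Q) := by
  classical
  induction L using Finset.induction_on generalizing f with
  | empty => simp
  | @insert a L ha ih =>
    have haR : a ∉ L ∪ R := by
      rw [Finset.mem_union]
      rintro (h1 | h1)
      · exact ha h1
      · exact absurd (Finset.disjoint_left.mp h (Finset.mem_insert_self a L)) (fun hh => hh h1)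
    have hdisj : Disjoint L R := h.mono_left (Finset.subset_insert a L)
    rw [show insert a L ∪ R = insert a (L ∪ R) from by rw [Finset.insert_union],
      Finset.sum_powerset_insert haR, Finset.sum_powerset_insert ha, ih hdisj f,
      ih hdisj (fun S => f (insert a S))]
    congr 1
    refine Finset.sum_congr rfl fun P _ => Finset.sum_congr rfl fun Q _ => ?_
    rw [Finset.insert_union]

lemma sum_powerset_card {α : Type*} [DecidableEq α] (L : Finset α) (g : ℕ → ℚ) :
    ∑ P ∈ L.powerset, g P.card =
      ∑ a ∈ range (L.card + 1), (L.card.choose a : ℚ) * g a := by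
  rw [Finset.sum_powerset]
  refine Finset.sum_congr rfl fun a _ => ?_
  rw [Finset.sum_powersetCard a L g, nsmul_eq_mul]

def Wt (k : ℤ) (τ : Equiv.Perm (Fin n)) (t : Fin n) (S : Finset (Fin n)) : ℚ :=
  (-1 : ℚ) ^ ((S.card : ℤ) - k) *
    ichoose S.card (((S.filter fun s => τ s < τ t).card : ℤ) - k)

lemma zpow_neg_one_sub (m : ℕ) (k : ℤ) :
    (-1 : ℚ) ^ ((m : ℤ) - k) = (-1 : ℚ) ^ k * (-1 : ℚ) ^ m := by
  have h0 : (-1 : ℚ) ≠ 0 := by norm_num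
  have hk : (-1 : ℚ) ^ k * (-1 : ℚ) ^ k = 1 := by
    rw [← zpow_add₀ h0, show k + k = 2 * k by ring, zpow_mul]
    norm_num
  rw [zpow_sub₀ h0, zpow_natCast, div_eq_mul_inv, inv_eq_of_mul_eq_one_right hk, mul_comm]

lemma per_t (k : ℤ) (τ : Equiv.Perm (Fin n)) (t : Fin n) :
    ∑ S ∈ (Dset τ t).powerset, Wt k τ t S = if (τ t : ℤ) - (t : ℤ) = k then 1 else 0 := by
  classical
  rw [Dset_eq_union, sum_powerset_union (disjoint_LR τ t)]
  have hPQ : ∀ P ∈ (Lset τ t).powerset, ∀ Q ∈ (Rset τ t).powerset,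
      Wt k τ t (P ∪ Q) = (-1 : ℚ) ^ k *
        ((-1 : ℚ) ^ (P.card + Q.card) *
          ichoose (P.card + Q.card) ((Q.card : ℤ) - k)) := by
    intro P hP Q hQ
    rw [mem_powerset] at hP hQ
    have hdisj : Disjoint P Q := (disjoint_LR τ t).mono hP hQ
    have hcard : (P ∪ Q).card = P.card + Q.card := Finset.card_union_of_disjoint hdisj
    have hfilt : (P ∪ Q).filter (fun s => τ s < τ t) = Q := by
      ext s
      simp only [mem_filter, mem_union]
      constructor
      · rintro ⟨hs | hs, hlt⟩
        · have := (mem_filter.mp (hP hs)).2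
          exact absurd hlt (not_lt.mpr (le_of_lt this.2))
        · exact hs
      · intro hs
        exact ⟨Or.inr hs, (mem_filter.mp (hQ hs)).2.2⟩
    rw [Wt, hcard, hfilt]
    rw [show ((P.card + Q.card : ℕ) : ℤ) - k = ((P.card + Q.card : ℕ) : ℤ) - k from rfl]
    rw [zpow_neg_one_sub (P.card + Q.card) k]
    ring
  rw [Finset.sum_congr rfl (fun P hP => Finset.sum_congr rfl (fun Q hQ => hPQ P hP Q hQ))]
  have hre : ∑ P ∈ (Lset τ t).powerset, ∑ Q ∈ (Rset τ t).powerset,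
      (-1 : ℚ) ^ k * ((-1 : ℚ) ^ (P.card + Q.card) *
        ichoose (P.card + Q.card) ((Q.card : ℤ) - k)) =
      (-1 : ℚ) ^ k * FF (Lset τ t).card (Rset τ t).card k := by
    simp only [← Finset.mul_sum]
    congr 1
    refine Eq.trans (sum_powerset_card (Lset τ t) (fun a =>
      ∑ Q ∈ (Rset τ t).powerset,
        ((-1 : ℚ) ^ (a + Q.card) * (ichoose (a + Q.card) ((Q.card : ℤ) - k) : ℚ)))) ?_
    unfold FF
    refine Finset.sum_congr rfl fun a _ => ?_
    congr 1
    exact sum_powerset_card (Rset τ t) (fun b =>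
      ((-1 : ℚ) ^ (a + b) * (ichoose (a + b) ((b : ℤ) - k) : ℚ)))
  rw [hre, FF_eq]
  have hBA := count_LR τ t
  by_cases hcond : (τ t : ℤ) - (t : ℤ) = k
  · rw [if_pos (show ((Rset τ t).card : ℤ) - ((Lset τ t).card : ℤ) = k by omega), if_pos hcond,
      mul_one]
    have h0 : (-1 : ℚ) ≠ 0 := by norm_num
    rw [← zpow_natCast (-1 : ℚ) ((Lset τ t).card + (Rset τ t).card), ← zpow_add₀ h0]
    rw [show k + (((Lset τ t).card + (Rset τ t).card : ℕ) : ℤ) = 2 * (Rset τ t).card by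
      push_cast; omega]
    rw [zpow_mul]
    norm_num
  · rw [if_neg (by omega), if_neg hcond, mul_zero, mul_zero]

lemma Dset_card_lt (τ : Equiv.Perm (Fin n)) (t : Fin n) : (Dset τ t).card + 1 ≤ n := by
  have hsub : Dset τ t ⊆ univ.erase t := by
    intro s hs
    rw [mem_Dset] at hs
    rw [mem_erase]
    refine ⟨?_, mem_univ s⟩
    rintro rfl
    rcases hs with ⟨h, -⟩ | ⟨h, -⟩ <;> exact absurd h (lt_irrefl _)
  have h1 := Finset.card_le_card hsub
  have h2 : (univ.erase t).card = n - 1 := by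
    rw [Finset.card_erase_of_mem (mem_univ t), card_univ, Fintype.card_fin]
  have h3 : 0 < n := t.pos
  omega

lemma sum_m_powerset (k : ℤ) (τ : Equiv.Perm (Fin n)) (t : Fin n) :
    ∑ m ∈ range n, ∑ S ∈ powersetCard m (Dset τ t), Wt k τ t S =
      ∑ S ∈ (Dset τ t).powerset, Wt k τ t S := by
  rw [Finset.sum_powerset]
  refine (Finset.sum_subset (range_subset_range.mpr (Dset_card_lt τ t)) ?_).symm
  intro m _ hm
  rw [mem_range, not_lt] at hm
  have : powersetCard m (Dset τ t) = ∅ := by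
    rw [Finset.powersetCard_eq_empty]
    omega
  rw [this, Finset.sum_empty]

/-- For `k ∈ ℤ`, `exc_k(τ)`, the number of entries `x = τ(j)` with excess `x - j = k`,
equals `∑_π (-1)^{|π|-k-1} (∑_{x ∈ SSF(π)} C(|π|-1, x-k-1)) occ(π, τ)`, summed over
nonempty permutations `π` (sizes `m + 1 ∈ [1, n]`; longer patterns contribute `0`).
In 1-indexed terms the value at position `j` of a `Fin`-permutation is `π j + 1`. -/
theorem exc_k_expansion (n : ℕ) (k : ℤ) (τ : Equiv.Perm (Fin n)) :
    ((univ.filter fun j : Fin n => (τ j : ℤ) - (j : ℤ) = k).card : ℚ) =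
      ∑ m ∈ range n, ∑ π : Equiv.Perm (Fin (m + 1)),
        (-1 : ℚ) ^ (((m : ℤ) + 1) - k - 1) *
          (∑ j ∈ ssfPos π, (ichoose m (((π j : ℤ) + 1) - k - 1) : ℚ)) *
          (occ π τ : ℚ) := by
  classical
  have step1 : ∀ m : ℕ, ∀ π : Equiv.Perm (Fin (m + 1)),
      (-1 : ℚ) ^ (((m : ℤ) + 1) - k - 1) *
        (∑ j ∈ ssfPos π, (ichoose m (((π j : ℤ) + 1) - k - 1) : ℚ)) * (occ π τ : ℚ) =
      (∑ j ∈ ssfPos π,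
        (-1 : ℚ) ^ ((m : ℤ) - k) * (ichoose m (((π j : ℕ) : ℤ) - k) : ℚ)) * (occ π τ : ℚ) := by
    intro m π
    congr 1
    rw [show ((m : ℤ) + 1) - k - 1 = (m : ℤ) - k by ring, Finset.mul_sum]
    refine Finset.sum_congr rfl fun j _ => ?_
    congr 2
    push_cast
    ring
  calc ((univ.filter fun j : Fin n => (τ j : ℤ) - (j : ℤ) = k).card : ℚ)
      = ∑ t : Fin n, (if (τ t : ℤ) - (t : ℤ) = k then (1 : ℚ) else 0) := by
        rw [Finset.card_filter]
        push_cast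
        refine Finset.sum_congr rfl fun t _ => ?_
        split_ifs <;> norm_num
    _ = ∑ t : Fin n, ∑ S ∈ (Dset τ t).powerset, Wt k τ t S := by
        refine Finset.sum_congr rfl fun t _ => ?_
        rw [per_t k τ t]
    _ = ∑ t : Fin n, ∑ m ∈ range n, ∑ S ∈ powersetCard m (Dset τ t), Wt k τ t S := by
        refine Finset.sum_congr rfl fun t _ => ?_
        rw [sum_m_powerset k τ t]
    _ = ∑ m ∈ range n, ∑ t : Fin n, ∑ S ∈ powersetCard m (Dset τ t), Wt k τ t S :=
        Finset.sum_comm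
    _ = ∑ m ∈ range n, ∑ t : Fin n,
          ∑ S ∈ powersetCard m (Dset τ t),
            (-1 : ℚ) ^ ((m : ℤ) - k) *
              (ichoose m (((S.filter fun s => τ s < τ t).card : ℤ) - k) : ℚ) := by
        refine Finset.sum_congr rfl fun m _ => Finset.sum_congr rfl fun t _ =>
          Finset.sum_congr rfl fun S hS => ?_
        rw [Wt, (mem_powersetCard.mp hS).2]
    _ = ∑ m ∈ range n, ∑ t : Fin n,
          ∑ T ∈ (powersetCard (m + 1) (univ : Finset (Fin n))).filter
              (fun T => t ∈ T ∧ ∀ s ∈ T, s ≠ t → s ∈ Dset τ t),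
            (-1 : ℚ) ^ ((m : ℤ) - k) *
              (ichoose m (((T.filter fun s => τ s < τ t).card : ℤ) - k) : ℚ) := by
        refine Finset.sum_congr rfl fun m _ => Finset.sum_congr rfl fun t _ => ?_
        rw [sum_T_erase m τ t
          (fun v => (-1 : ℚ) ^ ((m : ℤ) - k) * (ichoose m ((v : ℤ) - k) : ℚ))]
    _ = ∑ m ∈ range n, ∑ T ∈ powersetCard (m + 1) (univ : Finset (Fin n)),
          ∑ t ∈ T.filter (fun t => ∀ s ∈ T, s ≠ t → s ∈ Dset τ t),
            (-1 : ℚ) ^ ((m : ℤ) - k) *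
              (ichoose m (((T.filter fun s => τ s < τ t).card : ℤ) - k) : ℚ) := by
        refine Finset.sum_congr rfl fun m _ => ?_
        rw [swap_sum m τ (fun t T => (-1 : ℚ) ^ ((m : ℤ) - k) *
          (ichoose m (((T.filter fun s => τ s < τ t).card : ℤ) - k) : ℚ))]
    _ = ∑ m ∈ range n, ∑ T ∈ powersetCard (m + 1) (univ : Finset (Fin n)),
          ∑ j ∈ ssfPos (patt m τ T),
            (-1 : ℚ) ^ ((m : ℤ) - k) *
              (ichoose m (((patt m τ T j : ℕ) : ℤ) - k) : ℚ) := by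
        refine Finset.sum_congr rfl fun m _ => Finset.sum_congr rfl fun T hT => ?_
        rw [sum_ssf m τ T (mem_powersetCard.mp hT).2
          (fun v => (-1 : ℚ) ^ ((m : ℤ) - k) * (ichoose m ((v : ℤ) - k) : ℚ))]
    _ = ∑ m ∈ range n, ∑ π : Equiv.Perm (Fin (m + 1)),
          (∑ j ∈ ssfPos π,
            (-1 : ℚ) ^ ((m : ℤ) - k) * (ichoose m (((π j : ℕ) : ℤ) - k) : ℚ)) *
            (occ π τ : ℚ) := by
        refine Finset.sum_congr rfl fun m _ => ?_
        rw [sum_occ m τ (fun π => ∑ j ∈ ssfPos π,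
          (-1 : ℚ) ^ ((m : ℤ) - k) * (ichoose m (((π j : ℕ) : ℤ) - k) : ℚ))]
    _ = _ := by
        refine Finset.sum_congr rfl fun m _ => Finset.sum_congr rfl fun π _ => ?_
        rw [step1 m π]
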